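/- If the Booleanization T(f) of a monomial system f has only fixed points as limit cycles, then for any periodic point u of f (i.e., f^t(u) = u for some t ≥ 1), all iterates f^i(u) have the same support as u. -/

import Mathlib

/-- The monomial dynamical system with exponent matrix `A`. -/
def monomialMap {K : Type*} [CommRing K] {n : ℕ} (A : Matrix (Fin n) (Fin n) ℕ)
    (x : Fin n → K) : Fin n → K := fun i => ∏ j, x j ^ A i j

/-- The exponent matrix of the Booleanization `T(f)`. -/
def boolMat {n : ℕ} (A : Matrix (Fin n) (Fin n) ℕ) : Matrix (Fin n) (Fin n) ℕ :=
  fun i j => if 0 < A i j then 1 else 0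

/-- The support of a vector, as a vector over `F_2`. -/
def supp {K : Type*} [Zero K] [DecidableEq K] {n : ℕ} (u : Fin n → K) : Fin n → ZMod 2 :=
  fun i => if u i = 0 then 0 else 1

/-- A fixed point system: every periodic point is a fixed point. -/
def IsFixedPointSystem {X : Type*} (g : X → X) : Prop :=
  ∀ x, (∃ t, 0 < t ∧ g^[t] x = x) → g x = x

lemma supp_monomialMap {F : Type*} [Field F] [DecidableEq F] {n : ℕ}
    (A : Matrix (Fin n) (Fin n) ℕ) (u : Fin n → F) :
    supp (monomialMap A u) = monomialMap (boolMat A) (supp u) := by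
  funext i
  simp only [supp, monomialMap, boolMat]
  by_cases h : ∃ j, u j = 0 ∧ 0 < A i j
  · obtain ⟨j, hj0, hjA⟩ := h
    have h1 : ∏ k, u k ^ A i k = 0 :=
      Finset.prod_eq_zero (Finset.mem_univ j) (by simp [hj0, zero_pow hjA.ne'])
    have h2 : (∏ k, ((if u k = 0 then (0 : ZMod 2) else 1) ^ if 0 < A i k then 1 else 0)) = 0 :=
      Finset.prod_eq_zero (Finset.mem_univ j) (by simp [hj0, hjA])
    exact (if_pos h1).trans h2.symm
  · push_neg at h
    have h1 : ∏ k, u k ^ A i k ≠ 0 := by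
      intro hzero
      obtain ⟨k, -, hk⟩ := Finset.prod_eq_zero_iff.mp hzero
      rw [pow_eq_zero_iff'] at hk
      exact absurd (h k hk.1) (Nat.pos_of_ne_zero hk.2).not_ge
    have h2 : (∏ k, ((if u k = 0 then (0 : ZMod 2) else 1) ^ if 0 < A i k then 1 else 0)) = 1 := by
      apply Finset.prod_eq_one
      intro k _
      by_cases hA : 0 < A i k
      · have : u k ≠ 0 := fun h0 => absurd (h k h0) hA.not_ge
        simp [this, hA]
      · simp [hA]
    exact (if_neg h1).trans h2.symm

theorem stmt2 {F : Type*} [Field F] [Fintype F] [DecidableEq F] {n : ℕ}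
    (A : Matrix (Fin n) (Fin n) ℕ)
    (hT : IsFixedPointSystem (monomialMap (K := ZMod 2) (boolMat A)))
    (u : Fin n → F) (t : ℕ) (ht : 1 ≤ t) (hu : (monomialMap A)^[t] u = u) :
    ∀ i : ℕ, supp ((monomialMap A)^[i] u) = supp u := by
  have key : ∀ i : ℕ, supp ((monomialMap A)^[i] u)
      = (monomialMap (K := ZMod 2) (boolMat A))^[i] (supp u) := by
    intro i
    induction i with
    | zero => rfl
    | succ k ih =>
      rw [Function.iterate_succ_apply', supp_monomialMap, ih,
        Function.iterate_succ_apply']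
  have hper : (monomialMap (K := ZMod 2) (boolMat A))^[t] (supp u) = supp u := by
    rw [← key, hu]
  have hfix := hT (supp u) ⟨t, ht, hper⟩
  intro i
  rw [key, Function.iterate_fixed hfix]
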